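/- Let Q be a non-unital simple associative ring of characteristic not 2 or 3 (i.e., for every nonzero x ∈ Q, 2x ≠ 0 and 3x ≠ 0). For an additive subgroup B of Q the following are equivalent: (i) B is a maximal zero product subset of Q; (ii) B is a maximal regular inner ideal of Q; (iii) B is a maximal abelian inner ideal of the Lie ring Q⁽⁻⁾. -/

import Mathlib

/-- A two-sided ideal: an additive subgroup `I` with `QI ⊆ I` and `IQ ⊆ I`. -/
def IsTwoSidedIdealSub {Q : Type*} [NonUnitalRing Q] (I : AddSubgroup Q) : Prop :=
  (∀ a ∈ I, ∀ x : Q, x * a ∈ I) ∧ (∀ a ∈ I, ∀ x : Q, a * x ∈ I)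

/-- A nonempty subset `S` of `Q` has zero product if `S² = 0`. -/
def HasZeroProduct {Q : Type*} [NonUnitalRing Q] (S : Set Q) : Prop :=
  S.Nonempty ∧ ∀ s ∈ S, ∀ t ∈ S, s * t = 0

/-- A maximal zero product subset: maximal under inclusion among zero product subsets. -/
def IsMaxZeroProduct {Q : Type*} [NonUnitalRing Q] (S : Set Q) : Prop :=
  HasZeroProduct S ∧ ∀ T : Set Q, HasZeroProduct T → S ⊆ T → S = T

/-- A regular inner ideal: an additive subgroup `B` with `BQB ⊆ B` and `B² = 0`. -/
def IsRegInner {Q : Type*} [NonUnitalRing Q] (B : AddSubgroup Q) : Prop :=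
  (∀ b ∈ B, ∀ x : Q, ∀ b' ∈ B, b * x * b' ∈ B) ∧ (∀ b ∈ B, ∀ b' ∈ B, b * b' = 0)

/-- A maximal regular inner ideal: maximal under inclusion among regular inner ideals. -/
def IsMaxRegInner {Q : Type*} [NonUnitalRing Q] (B : AddSubgroup Q) : Prop :=
  IsRegInner B ∧ ∀ B' : AddSubgroup Q, IsRegInner B' → B ≤ B' → B = B'

/-- An abelian inner ideal of the Lie ring `Q⁽⁻⁾`: an additive subgroup `B` with
`[B, B] = 0` and `[[B, Q], B] ⊆ B`, where `[x, y] = x * y - y * x`. -/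
def IsAbelianLieInner {Q : Type*} [NonUnitalRing Q] (B : AddSubgroup Q) : Prop :=
  (∀ b ∈ B, ∀ b' ∈ B, b * b' - b' * b = 0) ∧
    ∀ b ∈ B, ∀ x : Q, ∀ b' ∈ B, (b * x - x * b) * b' - b' * (b * x - x * b) ∈ B

/-- A maximal abelian inner ideal: maximal under inclusion among abelian inner ideals. -/
def IsMaxAbelianLieInner {Q : Type*} [NonUnitalRing Q] (B : AddSubgroup Q) : Prop :=
  IsAbelianLieInner B ∧ ∀ B' : AddSubgroup Q, IsAbelianLieInner B' → B ≤ B' → B = B'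

namespace Cor410aux
variable {Q : Type*} [NonUnitalRing Q]

def dd (a x : Q) : Q := a * x - x * a
def tt (a x : Q) : Q := a * a * x - x * (a * a)

lemma two_cancel (hchar : ∀ x : Q, x ≠ 0 → x + x ≠ 0 ∧ x + x + x ≠ 0) {z : Q}
    (h : z + z = 0) : z = 0 := by
  by_contra hz; exact (hchar z hz).1 h

lemma three_cancel (hchar : ∀ x : Q, x ≠ 0 → x + x ≠ 0 ∧ x + x + x ≠ 0) {z : Q}
    (h : z + z + z = 0) : z = 0 := by
  by_contra hz; exact (hchar z hz).2 h

section Simple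
variable (hsimple : (∃ a b : Q, a * b ≠ 0) ∧
      ∀ I : AddSubgroup Q, IsTwoSidedIdealSub I → I = ⊥ ∨ I = ⊤)
include hsimple

lemma eq_top_of (I : AddSubgroup Q) (hI : IsTwoSidedIdealSub I) {z : Q} (hz : z ∈ I)
    (h0 : z ≠ 0) : ∀ x : Q, x ∈ I := by
  rcases hsimple.2 I hI with h | h
  · rw [h] at hz; exact absurd hz h0
  · rw [h]; intro x; trivial

lemma annL {x : Q} (h : ∀ q : Q, x * q = 0) : x = 0 := by
  by_contra hx
  set I : AddSubgroup Q :=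
    { carrier := {w : Q | ∀ q : Q, w * q = 0}
      zero_mem' := fun q => zero_mul q
      add_mem' := fun ha hb q => by rw [add_mul, ha q, hb q, add_zero]
      neg_mem' := fun ha q => by rw [neg_mul, ha q, neg_zero] } with hIdef
  have hI : IsTwoSidedIdealSub I := by
    constructor
    · intro w hw r q; show r * w * q = 0; rw [mul_assoc, hw q, mul_zero]
    · intro w hw r q; show w * r * q = 0; rw [mul_assoc, hw (r * q)]
  have htop := eq_top_of hsimple I hI (show x ∈ I from h) hx
  obtain ⟨p, q, hpq⟩ := hsimple.1
  exact hpq (htop p q)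

lemma annR {x : Q} (h : ∀ q : Q, q * x = 0) : x = 0 := by
  by_contra hx
  set I : AddSubgroup Q :=
    { carrier := {w : Q | ∀ q : Q, q * w = 0}
      zero_mem' := fun q => mul_zero q
      add_mem' := fun ha hb q => by rw [mul_add, ha q, hb q, add_zero]
      neg_mem' := fun ha q => by rw [mul_neg, ha q, neg_zero] } with hIdef
  have hI : IsTwoSidedIdealSub I := by
    constructor
    · intro w hw r q; show q * (r * w) = 0; rw [← mul_assoc, hw (q * r)]
    · intro w hw r q; show q * (w * r) = 0; rw [← mul_assoc]
      rw [hw q, zero_mul]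
  have htop := eq_top_of hsimple I hI (show x ∈ I from h) hx
  obtain ⟨p, q, hpq⟩ := hsimple.1
  exact hpq (htop q p)

lemma central_eq_zero (hnonunital : ¬∃ e : Q, ∀ x : Q, e * x = x ∧ x * e = x)
    {z : Q} (h : ∀ q : Q, z * q = q * z) : z = 0 := by
  by_contra hz
  -- left multiplication by z
  set f : Q →+ Q := AddMonoidHom.mk' (fun q => z * q) (fun p q => mul_add z p q) with hf
  have hIdeal : IsTwoSidedIdealSub f.range := by
    constructor
    · rintro w ⟨q, rfl⟩ r
      refine ⟨r * q, ?_⟩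
      show z * (r * q) = r * (z * q)
      rw [← mul_assoc, ← mul_assoc, h r]
    · rintro w ⟨q, rfl⟩ r
      exact ⟨q * r, by show z * (q * r) = z * q * r; rw [mul_assoc]⟩
  have hne : ∃ q : Q, z * q ≠ 0 := by
    by_contra hq; push_neg at hq; exact hz (annL hsimple hq)
  obtain ⟨q₀, hq₀⟩ := hne
  have htop := eq_top_of hsimple f.range hIdeal ⟨q₀, rfl⟩ hq₀
  have hsurj : ∀ w : Q, ∃ q : Q, z * q = w := fun w => htop w
  have hinj : ∀ w : Q, z * w = 0 → w = 0 := by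
    intro w hw
    by_contra hw0
    set K : AddSubgroup Q :=
      { carrier := {x : Q | z * x = 0}
        zero_mem' := mul_zero z
        add_mem' := fun ha hb => by simp only [Set.mem_setOf_eq] at *; rw [mul_add, ha, hb, add_zero]
        neg_mem' := fun ha => by simp only [Set.mem_setOf_eq] at *; rw [mul_neg, ha, neg_zero] } with hK
    have hKI : IsTwoSidedIdealSub K := by
      constructor
      · intro u hu r; show z * (r * u) = 0
        rw [← mul_assoc, h r, mul_assoc, hu, mul_zero]
      · intro u hu r; show z * (u * r) = 0
        rw [← mul_assoc, hu, zero_mul]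
    have := eq_top_of hsimple K hKI (show w ∈ K from hw) hw0
    exact hz (annL hsimple fun q => this q)
  obtain ⟨e, he⟩ := hsurj z
  apply hnonunital
  refine ⟨e, fun x => ⟨?_, ?_⟩⟩
  · have : z * (e * x - x) = 0 := by rw [mul_sub, ← mul_assoc, he, sub_self]
    exact sub_eq_zero.mp (hinj _ this)
  · have h2 : z * (x * e - x) = 0 := by
      rw [mul_sub, ← mul_assoc, h x, mul_assoc, he, ← h x, sub_self]
    exact sub_eq_zero.mp (hinj _ h2)
end Simple

section Ident
variable (hchar : ∀ x : Q, x ≠ 0 → x + x ≠ 0 ∧ x + x + x ≠ 0)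
variable (a : Q) (h3 : ∀ x : Q, dd a (dd a (dd a x)) = 0)
include hchar h3

lemma L1 (u v : Q) : dd a (dd a u) * dd a v + dd a u * dd a (dd a v) = 0 := by
  apply three_cancel hchar
  have e : (dd a (dd a u) * dd a v + dd a u * dd a (dd a v)) +
      (dd a (dd a u) * dd a v + dd a u * dd a (dd a v)) +
      (dd a (dd a u) * dd a v + dd a u * dd a (dd a v)) =
    dd a (dd a (dd a (u * v))) - dd a (dd a (dd a u)) * v - u * dd a (dd a (dd a v)) := by
    simp only [dd]; noncomm_ring
  rw [h3, h3, h3] at e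
  simpa using e

lemma LE (x w y : Q) :
    dd a (dd a x) * dd a w * y + dd a (dd a x) * w * dd a y + dd a x * dd a (dd a w) * y +
      x * dd a (dd a w) * dd a y + dd a x * w * dd a (dd a y) + x * dd a w * dd a (dd a y) +
      (dd a x * dd a w * dd a y + dd a x * dd a w * dd a y) = 0 := by
  apply three_cancel hchar
  have e : (dd a (dd a x) * dd a w * y + dd a (dd a x) * w * dd a y + dd a x * dd a (dd a w) * y +
      x * dd a (dd a w) * dd a y + dd a x * w * dd a (dd a y) + x * dd a w * dd a (dd a y) +
      (dd a x * dd a w * dd a y + dd a x * dd a w * dd a y)) +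
    (dd a (dd a x) * dd a w * y + dd a (dd a x) * w * dd a y + dd a x * dd a (dd a w) * y +
      x * dd a (dd a w) * dd a y + dd a x * w * dd a (dd a y) + x * dd a w * dd a (dd a y) +
      (dd a x * dd a w * dd a y + dd a x * dd a w * dd a y)) +
    (dd a (dd a x) * dd a w * y + dd a (dd a x) * w * dd a y + dd a x * dd a (dd a w) * y +
      x * dd a (dd a w) * dd a y + dd a x * w * dd a (dd a y) + x * dd a w * dd a (dd a y) +
      (dd a x * dd a w * dd a y + dd a x * dd a w * dd a y)) =
    dd a (dd a (dd a (x * w * y))) - dd a (dd a (dd a x)) * (w * y)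
      - x * dd a (dd a (dd a w)) * y - (x * w) * dd a (dd a (dd a y)) := by
    simp only [dd]; noncomm_ring
  rw [h3, h3, h3, h3] at e
  simpa using e

lemma LG (x w y : Q) :
    dd a (dd a x) * w * dd a y + dd a x * w * dd a (dd a y) +
      (dd a x * dd a w * dd a y + dd a x * dd a w * dd a y) = 0 := by
  have h1 := L1 hchar a h3 x (w * y)
  have h2 := L1 hchar a h3 (x * w) y
  have hE := LE hchar a h3 x w y
  have key : dd a (dd a x) * w * dd a y + dd a x * w * dd a (dd a y) +
      (dd a x * dd a w * dd a y + dd a x * dd a w * dd a y) =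
    (dd a (dd a x) * dd a (w * y) + dd a x * dd a (dd a (w * y))) +
    (dd a (dd a (x * w)) * dd a y + dd a (x * w) * dd a (dd a y)) -
    (dd a (dd a x) * dd a w * y + dd a (dd a x) * w * dd a y + dd a x * dd a (dd a w) * y +
      x * dd a (dd a w) * dd a y + dd a x * w * dd a (dd a y) + x * dd a w * dd a (dd a y) +
      (dd a x * dd a w * dd a y + dd a x * dd a w * dd a y)) := by
    simp only [dd]; noncomm_ring
  rw [key, h1, h2, hE]; simp

lemma P2 (x w y : Q) : dd a x * w * tt a y = tt a x * w * dd a y := by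
  have hg := LG hchar a h3 x w y
  have e : dd a x * w * tt a y - tt a x * w * dd a y =
      -(dd a (dd a x) * w * dd a y + dd a x * w * dd a (dd a y) +
        (dd a x * dd a w * dd a y + dd a x * dd a w * dd a y)) := by
    simp only [dd, tt]; noncomm_ring
  rw [hg, neg_zero] at e
  exact sub_eq_zero.mp e

lemma P3g (y : Q) :
    tt a (a * y + y * a) =
      (tt a (a * y) + tt a (a * y) + tt a (a * y) + tt a (a * y))
        - (a * a * dd a y + a * a * dd a y + a * a * dd a y + a * a * dd a y) := by
  have e : tt a (a * y + y * a) =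
      (tt a (a * y) + tt a (a * y) + tt a (a * y) + tt a (a * y))
        - (a * a * dd a y + a * a * dd a y + a * a * dd a y + a * a * dd a y)
        + dd a (dd a (dd a y)) := by
    simp only [dd, tt]; noncomm_ring
  rw [h3, add_zero] at e; exact e

lemma P3g' (y : Q) :
    tt a (a * y + y * a) =
      (tt a (y * a) + tt a (y * a) + tt a (y * a) + tt a (y * a))
        - (dd a y * (a * a) + dd a y * (a * a) + dd a y * (a * a) + dd a y * (a * a)) := by
  have e : tt a (a * y + y * a) =
      (tt a (y * a) + tt a (y * a) + tt a (y * a) + tt a (y * a))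
        - (dd a y * (a * a) + dd a y * (a * a) + dd a y * (a * a) + dd a y * (a * a))
        + dd a (dd a (dd a y)) := by
    simp only [dd, tt]; noncomm_ring
  rw [h3, add_zero] at e; exact e

end Ident

/-- pure identities -/
lemma tt_eq_dd (a y : Q) : tt a y = dd a (a * y + y * a) := by
  simp only [dd, tt]; noncomm_ring

lemma ida (a y v : Q) : a * (dd a y * v) = dd a (a * y) * v := by
  simp only [dd]; noncomm_ring

lemma idb (a u y : Q) : (u * dd a y) * a = u * dd a (y * a) := by
  simp only [dd]; noncomm_ring

/-- generating set of the graph of the centroid element. -/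
def Sgr (a : Q) : Set (Q × Q) := {p | ∃ y v : Q, p = (dd a y * v, tt a y * v)}

/-- the graph of the centroid element. -/
def Gr (a : Q) : AddSubgroup (Q × Q) := AddSubgroup.closure (Sgr a)

lemma mem_Gr_of_gen (a y v : Q) : ((dd a y * v, tt a y * v) : Q × Q) ∈ Gr a :=
  AddSubgroup.subset_closure ⟨y, v, rfl⟩

lemma Gr_memL (a q : Q) {p : Q × Q} (hp : p ∈ Gr a) : ((q * p.1, q * p.2) : Q × Q) ∈ Gr a := by
  induction hp using AddSubgroup.closure_induction with
  | mem p hp =>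
    obtain ⟨y, v, rfl⟩ := hp
    have e1 : q * (dd a y * v) = dd a (q * y) * v - dd a q * (y * v) := by
      simp only [dd]; noncomm_ring
    have e2 : q * (tt a y * v) = tt a (q * y) * v - tt a q * (y * v) := by
      simp only [dd, tt]; noncomm_ring
    have : ((q * (dd a y * v), q * (tt a y * v)) : Q × Q) =
        (dd a (q * y) * v, tt a (q * y) * v) - (dd a q * (y * v), tt a q * (y * v)) := by
      rw [Prod.mk_sub_mk, e1, e2]
    rw [this]
    exact sub_mem (mem_Gr_of_gen a _ _) (mem_Gr_of_gen a _ _)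
  | zero => simp only [Prod.fst_zero, Prod.snd_zero, mul_zero, zero_mul]; exact zero_mem (Gr a)
  | add x y hx hy hx' hy' =>
    have : ((q * (x + y).1, q * (x + y).2) : Q × Q) = (q * x.1, q * x.2) + (q * y.1, q * y.2) := by
      simp [mul_add, Prod.ext_iff]
    rw [this]; exact add_mem hx' hy'
  | neg x hx hx' =>
    have : ((q * (-x).1, q * (-x).2) : Q × Q) = -(q * x.1, q * x.2) := by
      simp [mul_neg, Prod.ext_iff]
    rw [this]; exact neg_mem hx'

lemma Gr_memR (a q : Q) {p : Q × Q} (hp : p ∈ Gr a) : ((p.1 * q, p.2 * q) : Q × Q) ∈ Gr a := by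
  induction hp using AddSubgroup.closure_induction with
  | mem p hp =>
    obtain ⟨y, v, rfl⟩ := hp
    have : (((dd a y * v) * q, (tt a y * v) * q) : Q × Q) =
        (dd a y * (v * q), tt a y * (v * q)) := by
      rw [Prod.mk.injEq]; exact ⟨mul_assoc _ _ _, mul_assoc _ _ _⟩
    rw [this]; exact mem_Gr_of_gen a _ _
  | zero => simp only [Prod.fst_zero, Prod.snd_zero, mul_zero, zero_mul]; exact zero_mem (Gr a)
  | add x y hx hy hx' hy' =>
    have : (((x + y).1 * q, (x + y).2 * q) : Q × Q) = (x.1 * q, x.2 * q) + (y.1 * q, y.2 * q) := by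
      simp [add_mul, Prod.ext_iff]
    rw [this]; exact add_mem hx' hy'
  | neg x hx hx' =>
    have : (((-x).1 * q, (-x).2 * q) : Q × Q) = -(x.1 * q, x.2 * q) := by
      simp [neg_mul, Prod.ext_iff]
    rw [this]; exact neg_mem hx'

section Graph
variable (hchar : ∀ x : Q, x ≠ 0 → x + x ≠ 0 ∧ x + x + x ≠ 0)
variable (a : Q) (h3 : ∀ x : Q, dd a (dd a (dd a x)) = 0)
include hchar h3

lemma Gr_Rgen {p : Q × Q} (hp : p ∈ Gr a) (y v : Q) :
    (dd a y * v) * p.2 = (tt a y * v) * p.1 := by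
  induction hp using AddSubgroup.closure_induction with
  | mem p hp =>
    obtain ⟨y', v', rfl⟩ := hp
    show (dd a y * v) * (tt a y' * v') = (tt a y * v) * (dd a y' * v')
    have h := P2 hchar a h3 y v y'
    calc (dd a y * v) * (tt a y' * v') = (dd a y * v * tt a y') * v' := by rw [← mul_assoc]
    _ = (tt a y * v * dd a y') * v' := by rw [h]
    _ = (tt a y * v) * (dd a y' * v') := by rw [mul_assoc]
  | zero => show (dd a y * v) * (0 : Q × Q).2 = (tt a y * v) * (0 : Q × Q).1; simp
  | add s t hs ht hs' ht' =>
    show (dd a y * v) * (s + t).2 = (tt a y * v) * (s + t).1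
    have : (s + t).2 = s.2 + t.2 := rfl
    rw [this, show (s + t).1 = s.1 + t.1 from rfl, mul_add, mul_add, hs', ht']
  | neg s hs hs' =>
    show (dd a y * v) * (-s).2 = (tt a y * v) * (-s).1
    rw [show (-s).2 = -s.2 from rfl, show (-s).1 = -s.1 from rfl, mul_neg, mul_neg, hs']

lemma Gr_R2 {p : Q × Q} (hp : p ∈ Gr a) {p' : Q × Q} (hp' : p' ∈ Gr a) :
    p'.1 * p.2 = p'.2 * p.1 := by
  induction hp' using AddSubgroup.closure_induction with
  | mem s hs =>
    obtain ⟨y, v, rfl⟩ := hs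
    exact Gr_Rgen hchar a h3 hp y v
  | zero => simp
  | add s t hs ht hs' ht' =>
    show (s + t).1 * p.2 = (s + t).2 * p.1
    rw [show (s + t).1 = s.1 + t.1 from rfl, show (s + t).2 = s.2 + t.2 from rfl,
      add_mul, add_mul, hs', ht']
  | neg s hs hs' =>
    show (-s).1 * p.2 = (-s).2 * p.1
    rw [show (-s).1 = -s.1 from rfl, show (-s).2 = -s.2 from rfl, neg_mul, neg_mul, hs']

end Graph

theorem sq_zero
    (hsimple : (∃ a b : Q, a * b ≠ 0) ∧
      ∀ I : AddSubgroup Q, IsTwoSidedIdealSub I → I = ⊥ ∨ I = ⊤)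
    (hnonunital : ¬∃ e : Q, ∀ x : Q, e * x = x ∧ x * e = x)
    (hchar : ∀ x : Q, x ≠ 0 → x + x ≠ 0 ∧ x + x + x ≠ 0)
    (a : Q) (h3 : ∀ x : Q, dd a (dd a (dd a x)) = 0) : a * a = 0 := by
  classical
  by_cases hcen : ∀ y : Q, dd a y = 0
  · have ha : a = 0 := central_eq_zero hsimple hnonunital
      (fun q => sub_eq_zero.mp (hcen q))
    rw [ha, zero_mul]
  push_neg at hcen
  obtain ⟨y₀, hy₀⟩ := hcen
  -- the first projection of the graph is everything
  have hfst : ∀ z : Q, ∃ g : Q, ((z, g) : Q × Q) ∈ Gr a := by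
    have hJI : IsTwoSidedIdealSub ((Gr a).map (AddMonoidHom.fst Q Q)) := by
      constructor
      · rintro w ⟨p, hp, rfl⟩ x
        exact ⟨(x * p.1, x * p.2), Gr_memL a x hp, rfl⟩
      · rintro w ⟨p, hp, rfl⟩ x
        exact ⟨(p.1 * x, p.2 * x), Gr_memR a x hp, rfl⟩
    have hv₀ : ∃ v : Q, dd a y₀ * v ≠ 0 := by
      by_contra hv; push_neg at hv
      exact hy₀ (annL hsimple hv)
    obtain ⟨v₀, hv₀⟩ := hv₀
    have hmem : dd a y₀ * v₀ ∈ (Gr a).map (AddMonoidHom.fst Q Q) :=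
      ⟨_, mem_Gr_of_gen a y₀ v₀, rfl⟩
    have htop := eq_top_of hsimple _ hJI hmem hv₀
    intro z
    obtain ⟨p, hp, hp1⟩ := htop z
    refine ⟨p.2, ?_⟩
    have hzp : ((z, p.2) : Q × Q) = p := by rw [← hp1]; rfl
    rw [hzp]; exact hp
  -- functionality of the graph
  have hfun : ∀ g : Q, (((0 : Q), g) : Q × Q) ∈ Gr a → g = 0 := by
    intro g hg
    apply annR hsimple
    intro q
    obtain ⟨g', hg'⟩ := hfst q
    have := Gr_R2 hchar a h3 hg hg'
    simpa using this
  -- the centroid-like map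
  let gam : Q → Q := fun z => Classical.choose (hfst z)
  have hgam : ∀ z : Q, ((z, gam z) : Q × Q) ∈ Gr a := fun z => Classical.choose_spec (hfst z)
  have huniq : ∀ z g : Q, ((z, g) : Q × Q) ∈ Gr a → gam z = g := by
    intro z g hzg
    have hsub : (((0 : Q), gam z - g) : Q × Q) ∈ Gr a := by
      have := sub_mem (hgam z) hzg
      simpa using this
    exact sub_eq_zero.mp (hfun _ hsub)
  have gam_zero : gam 0 = 0 := huniq 0 0 (zero_mem _)
  have gam_add : ∀ z z' : Q, gam (z + z') = gam z + gam z' := fun z z' =>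
    huniq _ _ (add_mem (hgam z) (hgam z'))
  have gam_neg : ∀ z : Q, gam (-z) = -gam z := fun z => huniq _ _ (neg_mem (hgam z))
  have gam_lmul : ∀ q z : Q, gam (q * z) = q * gam z := fun q z =>
    huniq _ _ (Gr_memL a q (hgam z))
  have gam_rmul : ∀ z q : Q, gam (z * q) = gam z * q := fun z q =>
    huniq _ _ (Gr_memR a q (hgam z))
  have gam_gen : ∀ y v : Q, gam (dd a y * v) = tt a y * v := fun y v =>
    huniq _ _ (mem_Gr_of_gen a y v)
  have gam_ud : ∀ u y : Q, gam (u * dd a y) = u * tt a y := by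
    intro u y
    have key : ∀ q : Q, (gam (u * dd a y) - u * tt a y) * q = 0 := by
      intro q
      have e1 : gam (u * dd a y) * q = gam (u * (dd a y * q)) := by
        rw [← gam_rmul, mul_assoc]
      have e2 : gam (u * (dd a y * q)) = u * (tt a y * q) := by
        rw [gam_lmul, gam_gen]
      rw [sub_mul, e1, e2, ← mul_assoc, sub_self]
    exact sub_eq_zero.mp (annL hsimple key)
  -- the candidate "scalar"
  set c : Q := gam a + gam a + gam a + gam a - (a * a + a * a + a * a + a * a) with hc
  -- γ² z = c * z
  have claimA : ∀ z : Q, gam (gam z) = c * z := by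
    have main : ∀ p : Q × Q, p ∈ Gr a → gam p.2 = c * p.1 := by
      intro p hp
      induction hp using AddSubgroup.closure_induction with
      | mem s hs =>
        obtain ⟨y, v, rfl⟩ := hs
        show gam (tt a y * v) = c * (dd a y * v)
        have ega : gam a * (dd a y * v) = tt a (a * y) * v := by
          rw [← gam_rmul, ida, gam_gen]
        have lhs1 : gam (tt a y * v) = tt a (a * y + y * a) * v := by
          rw [tt_eq_dd a y, gam_gen]
        rw [lhs1, P3g hchar a h3 y, hc]
        simp only [sub_mul, add_mul]
        rw [ega]
        simp only [← mul_assoc]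
      | zero =>
        show gam (0 : Q) = c * (0 : Q)
        rw [gam_zero, mul_zero]
      | add s t hs ht hs' ht' =>
        show gam (s + t).2 = c * (s + t).1
        rw [show (s + t).2 = s.2 + t.2 from rfl, show (s + t).1 = s.1 + t.1 from rfl,
          gam_add, hs', ht', mul_add]
      | neg s hs hs' =>
        show gam (-s).2 = c * (-s).1
        rw [show (-s).2 = -s.2 from rfl, show (-s).1 = -s.1 from rfl,
          gam_neg, hs', mul_neg]
    intro z
    exact main (z, gam z) (hgam z)
  -- γ² z = z * c
  have hJ' : ∀ z : Q, z ∈ AddSubgroup.closure {w : Q | ∃ u y : Q, w = u * dd a y} := by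
    have hJI : IsTwoSidedIdealSub (AddSubgroup.closure {w : Q | ∃ u y : Q, w = u * dd a y}) := by
      constructor
      · intro w hw x
        induction hw using AddSubgroup.closure_induction with
        | mem s hs =>
          obtain ⟨u, y, rfl⟩ := hs
          exact AddSubgroup.subset_closure ⟨x * u, y, by rw [mul_assoc]⟩
        | zero => rw [mul_zero]; exact zero_mem _
        | add s t hs ht hs' ht' => rw [mul_add]; exact add_mem hs' ht'
        | neg s hs hs' => rw [mul_neg]; exact neg_mem hs'
      · intro w hw x
        induction hw using AddSubgroup.closure_induction with
        | mem s hs =>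
          obtain ⟨u, y, rfl⟩ := hs
          have e : (u * dd a y) * x = u * dd a (y * x) - (u * y) * dd a x := by
            simp only [dd]; noncomm_ring
          rw [e]
          exact sub_mem (AddSubgroup.subset_closure ⟨u, y * x, rfl⟩)
            (AddSubgroup.subset_closure ⟨u * y, x, rfl⟩)
        | zero => rw [zero_mul]; exact zero_mem _
        | add s t hs ht hs' ht' => rw [add_mul]; exact add_mem hs' ht'
        | neg s hs hs' => rw [neg_mul]; exact neg_mem hs'
    have hu₀ : ∃ u : Q, u * dd a y₀ ≠ 0 := by
      by_contra hu; push_neg at hu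
      exact hy₀ (annR hsimple hu)
    obtain ⟨u₀, hu₀⟩ := hu₀
    exact eq_top_of hsimple _ hJI (AddSubgroup.subset_closure ⟨u₀, y₀, rfl⟩) hu₀
  have claimB : ∀ z : Q, gam (gam z) = z * c := by
    intro z
    induction hJ' z using AddSubgroup.closure_induction with
    | mem s hs =>
      obtain ⟨u, y, rfl⟩ := hs
      have egb : (u * dd a y) * gam a = u * tt a (y * a) := by
        rw [← gam_lmul, idb, gam_ud]
      have lhs1 : gam (gam (u * dd a y)) = u * tt a (a * y + y * a) := by
        rw [gam_ud, tt_eq_dd a y, gam_ud]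
      rw [lhs1, P3g' hchar a h3 y, hc]
      simp only [mul_sub, mul_add]
      rw [egb]
      simp only [← mul_assoc]
    | zero =>
      rw [gam_zero, gam_zero, zero_mul]
    | add s t hs ht hs' ht' =>
      rw [gam_add, gam_add, hs', ht', add_mul]
    | neg s hs hs' =>
      rw [gam_neg, gam_neg, hs', neg_mul]
  -- finish
  by_cases ht : ∀ y : Q, tt a y = 0
  · exact central_eq_zero hsimple hnonunital (fun q => sub_eq_zero.mp (ht q))
  exfalso
  push_neg at ht
  obtain ⟨y₁, hy₁⟩ := ht
  have hv₁ : ∃ v : Q, tt a y₁ * v ≠ 0 := by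
    by_contra hv; push_neg at hv
    exact hy₁ (annL hsimple hv)
  obtain ⟨v₁, hv₁⟩ := hv₁
  -- γ is injective
  have hinj : ∀ z : Q, gam z = 0 → z = 0 := by
    have hKI : IsTwoSidedIdealSub
        { carrier := {z : Q | gam z = 0}
          zero_mem' := gam_zero
          add_mem' := by
            intro p q hp hq
            show gam (p + q) = 0
            rw [gam_add, hp, hq, add_zero]
          neg_mem' := by
            intro p hp
            show gam (-p) = 0
            rw [gam_neg, hp, neg_zero] } := by
      constructor
      · intro w hw x
        show gam (x * w) = 0
        rw [gam_lmul, hw, mul_zero]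
      · intro w hw x
        show gam (w * x) = 0
        rw [gam_rmul, hw, zero_mul]
    rcases hsimple.2 _ hKI with h | h
    · intro z hz
      have : z ∈ (⊥ : AddSubgroup Q) := h ▸ hz
      exact AddSubgroup.mem_bot.mp this
    · exfalso
      have : gam (dd a y₁ * v₁) = 0 := by
        have : dd a y₁ * v₁ ∈ (⊤ : AddSubgroup Q) := trivial
        rw [← h] at this
        exact this
      rw [gam_gen] at this
      exact hv₁ this
  -- γ is surjective
  have hsurj : ∀ w : Q, ∃ z : Q, gam z = w := by
    have hSI : IsTwoSidedIdealSub ((Gr a).map (AddMonoidHom.snd Q Q)) := by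
      constructor
      · rintro w ⟨p, hp, rfl⟩ x
        exact ⟨(x * p.1, x * p.2), Gr_memL a x hp, rfl⟩
      · rintro w ⟨p, hp, rfl⟩ x
        exact ⟨(p.1 * x, p.2 * x), Gr_memR a x hp, rfl⟩
    have hmem : tt a y₁ * v₁ ∈ (Gr a).map (AddMonoidHom.snd Q Q) :=
      ⟨_, mem_Gr_of_gen a y₁ v₁, rfl⟩
    have htop := eq_top_of hsimple _ hSI hmem hv₁
    intro w
    obtain ⟨p, hp, hp2⟩ := htop w
    refine ⟨p.1, ?_⟩
    have := huniq p.1 p.2 hp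
    rw [this]; exact hp2
  obtain ⟨z₂, hz₂⟩ := hsurj c
  obtain ⟨e, he⟩ := hsurj z₂
  have hce : gam (gam e) = c := by rw [he, hz₂]
  have hec : c * e = c := by rw [← claimA e, hce]
  have hec' : e * c = c := by rw [← claimB e, hce]
  have unit1 : ∀ x : Q, e * x = x := by
    intro x
    have h0 : gam (gam (e * x - x)) = 0 := by
      rw [claimA, mul_sub, ← mul_assoc, hec, sub_self]
    exact sub_eq_zero.mp (hinj _ (hinj _ h0))
  have unit2 : ∀ x : Q, x * e = x := by
    intro x
    have h0 : gam (gam (x * e - x)) = 0 := by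
      rw [claimB, sub_mul, mul_assoc, hec', sub_self]
    exact sub_eq_zero.mp (hinj _ (hinj _ h0))
  exact hnonunital ⟨e, fun x => ⟨unit1 x, unit2 x⟩⟩

/-- every abelian inner ideal squares to zero -/
theorem abelian_sq_zero
    (hsimple : (∃ a b : Q, a * b ≠ 0) ∧
      ∀ I : AddSubgroup Q, IsTwoSidedIdealSub I → I = ⊥ ∨ I = ⊤)
    (hnonunital : ¬∃ e : Q, ∀ x : Q, e * x = x ∧ x * e = x)
    (hchar : ∀ x : Q, x ≠ 0 → x + x ≠ 0 ∧ x + x + x ≠ 0)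
    {B : AddSubgroup Q} (hB : IsAbelianLieInner B) :
    ∀ b ∈ B, ∀ c ∈ B, b * c = 0 := by
  have hsq : ∀ b ∈ B, b * b = 0 := by
    intro b hb
    apply sq_zero hsimple hnonunital hchar b
    intro x
    have hK : (b * x - x * b) * b - b * (b * x - x * b) ∈ B := hB.2 b hb x b hb
    have hcomm := hB.1 b hb _ hK
    have e : dd b (dd b (dd b x)) =
        -(b * ((b * x - x * b) * b - b * (b * x - x * b)) -
          ((b * x - x * b) * b - b * (b * x - x * b)) * b) := by
      simp only [dd]; noncomm_ring
    rw [e, hcomm, neg_zero]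
  intro b hb c hc
  have h1 : (b + c) * (b + c) = 0 := hsq _ (add_mem hb hc)
  have h2 := hsq b hb
  have h3 := hsq c hc
  have h4 := hB.1 b hb c hc
  apply two_cancel hchar
  have e : b * c + b * c = ((b + c) * (b + c) - b * b - c * c) + (b * c - c * b) := by
    noncomm_ring
  rw [e, h1, h2, h3, h4]
  simp

/-- regular inner ideals are abelian inner ideals -/
theorem reg_abelian {B : AddSubgroup Q} (hB : IsRegInner B) : IsAbelianLieInner B := by
  constructor
  · intro b hb c hc
    rw [hB.2 b hb c hc, hB.2 c hc b hb, sub_zero]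
  · intro b hb x c hc
    have e : (b * x - x * b) * c - c * (b * x - x * b) =
        (b * x * c + c * x * b) - (x * (b * c) + (c * b) * x) := by noncomm_ring
    rw [e, hB.2 b hb c hc, hB.2 c hc b hb, mul_zero, zero_mul, add_zero, sub_zero]
    exact add_mem (hB.1 b hb x c hc) (hB.1 c hc x b hb)

/-- pairwise zero products extend to the additive closure -/
lemma closure_mul_zero {S : Set Q} (hS : ∀ s ∈ S, ∀ t ∈ S, s * t = 0) :
    ∀ u ∈ AddSubgroup.closure S, ∀ v ∈ AddSubgroup.closure S, u * v = 0 := by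
  have step1 : ∀ v ∈ AddSubgroup.closure S, ∀ g ∈ S, g * v = 0 := by
    intro v hv
    induction hv using AddSubgroup.closure_induction with
    | mem t ht => intro g hg; exact hS g hg t ht
    | zero => intro g hg; exact mul_zero g
    | add s t hs ht hs' ht' => intro g hg; rw [mul_add, hs' g hg, ht' g hg, add_zero]
    | neg s hs hs' => intro g hg; rw [mul_neg, hs' g hg, neg_zero]
  intro u hu
  induction hu using AddSubgroup.closure_induction with
  | mem g hg => intro v hv; exact step1 v hv g hg
  | zero => intro v hv; exact zero_mul v
  | add s t hs ht hs' ht' => intro v hv; rw [add_mul, hs' v hv, ht' v hv, add_zero]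
  | neg s hs hs' => intro v hv; rw [neg_mul, hs' v hv, neg_zero]

/-- generating set of the regular inner ideal generated by a zero square subgroup -/
def hatS (B : AddSubgroup Q) : Set Q :=
  (B : Set Q) ∪ {z | ∃ b ∈ B, ∃ x : Q, ∃ c ∈ B, z = b * x * c}

def hat (B : AddSubgroup Q) : AddSubgroup Q := AddSubgroup.closure (hatS B)

lemma le_hat (B : AddSubgroup Q) : B ≤ hat B :=
  fun _ hb => AddSubgroup.subset_closure (Or.inl hb)

lemma hatS_mul_zero {B : AddSubgroup Q} (hB2 : ∀ b ∈ B, ∀ c ∈ B, b * c = 0) :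
    ∀ s ∈ hatS B, ∀ t ∈ hatS B, s * t = 0 := by
  rintro s (hs | ⟨b, hb, x, c, hc, rfl⟩) t (ht | ⟨b', hb', x', c', hc', rfl⟩)
  · exact hB2 s hs t ht
  · have e : s * (b' * x' * c') = (s * b') * (x' * c') := by noncomm_ring
    rw [e, hB2 s hs b' hb', zero_mul]
  · have e : (b * x * c) * t = (b * x) * (c * t) := by noncomm_ring
    rw [e, hB2 c hc t ht, mul_zero]
  · have e : (b * x * c) * (b' * x' * c') = (b * x) * (c * b') * (x' * c') := by noncomm_ring
    rw [e, hB2 c hc b' hb', mul_zero, zero_mul]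

lemma hat_mul_zero {B : AddSubgroup Q} (hB2 : ∀ b ∈ B, ∀ c ∈ B, b * c = 0) :
    ∀ u ∈ hat B, ∀ v ∈ hat B, u * v = 0 :=
  closure_mul_zero (hatS_mul_zero hB2)

lemma hatS_mid {B : AddSubgroup Q} :
    ∀ s ∈ hatS B, ∀ x : Q, ∀ t ∈ hatS B, s * x * t ∈ hatS B := by
  rintro s (hs | ⟨b, hb, x0, c, hc, rfl⟩) x t (ht | ⟨b', hb', x', c', hc', rfl⟩)
  · exact Or.inr ⟨s, hs, x, t, ht, rfl⟩
  · exact Or.inr ⟨s, hs, x * b' * x', c', hc', by noncomm_ring⟩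
  · exact Or.inr ⟨b, hb, x0 * c * x, t, ht, by noncomm_ring⟩
  · exact Or.inr ⟨b, hb, x0 * c * x * b' * x', c', hc', by noncomm_ring⟩

lemma hat_mid (B : AddSubgroup Q) :
    ∀ u ∈ hat B, ∀ x : Q, ∀ v ∈ hat B, u * x * v ∈ hat B := by
  have stepA : ∀ v ∈ hat B, ∀ g ∈ hatS B, ∀ x : Q, g * x * v ∈ hat B := by
    intro v hv
    induction hv using AddSubgroup.closure_induction with
    | mem t ht => intro g hg x; exact AddSubgroup.subset_closure (hatS_mid g hg x t ht)
    | zero => intro g hg x; rw [mul_zero]; exact zero_mem _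
    | add s t hs ht hs' ht' =>
      intro g hg x
      rw [mul_add]; exact add_mem (hs' g hg x) (ht' g hg x)
    | neg s hs hs' =>
      intro g hg x
      rw [mul_neg]; exact neg_mem (hs' g hg x)
  intro u hu
  induction hu using AddSubgroup.closure_induction with
  | mem g hg => intro x v hv; exact stepA v hv g hg x
  | zero => intro x v hv; rw [zero_mul, zero_mul]; exact zero_mem _
  | add s t hs ht hs' ht' =>
    intro x v hv
    rw [add_mul, add_mul]; exact add_mem (hs' x v hv) (ht' x v hv)
  | neg s hs hs' =>
    intro x v hv
    rw [neg_mul, neg_mul]; exact neg_mem (hs' x v hv)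

lemma hat_reg {B : AddSubgroup Q} (hB2 : ∀ b ∈ B, ∀ c ∈ B, b * c = 0) :
    IsRegInner (hat B) :=
  ⟨hat_mid B, hat_mul_zero hB2⟩

/-- (i) ⟹ (ii) -/
theorem imp1 (B : AddSubgroup Q) (h : IsMaxZeroProduct (B : Set Q)) : IsMaxRegInner B := by
  refine ⟨⟨?_, fun b hb c hc => h.1.2 b hb c hc⟩, ?_⟩
  · intro b hb x c hc
    have hzp : HasZeroProduct ((B : Set Q) ∪ {b * x * c}) := by
      refine ⟨⟨b, Or.inl hb⟩, ?_⟩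
      rintro s (hs | rfl) t (ht | rfl)
      · exact h.1.2 s hs t ht
      · have e : s * (b * x * c) = (s * b) * (x * c) := by noncomm_ring
        rw [e, h.1.2 s hs b hb, zero_mul]
      · have e : (b * x * c) * t = (b * x) * (c * t) := by noncomm_ring
        rw [e, h.1.2 c hc t ht, mul_zero]
      · have e : (b * x * c) * (b * x * c) = (b * x) * (c * b) * (x * c) := by noncomm_ring
        rw [e, h.1.2 c hc b hb, mul_zero, zero_mul]
    have heq := h.2 _ hzp Set.subset_union_left
    have hmem : b * x * c ∈ (B : Set Q) ∪ {b * x * c} := Or.inr rfl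
    rw [← heq] at hmem
    exact hmem
  · intro B' hB' hle
    have heq : (B : Set Q) = (B' : Set Q) :=
      h.2 _ ⟨⟨0, zero_mem _⟩, fun s hs t ht => hB'.2 s hs t ht⟩ hle
    exact SetLike.ext' heq

/-- (ii) ⟹ (i) -/
theorem imp2 (B : AddSubgroup Q) (h : IsMaxRegInner B) : IsMaxZeroProduct (B : Set Q) := by
  refine ⟨⟨⟨0, zero_mem B⟩, fun s hs t ht => h.1.2 s hs t ht⟩, ?_⟩
  intro T hT hBT
  have hC2 : ∀ b ∈ AddSubgroup.closure T, ∀ c ∈ AddSubgroup.closure T, b * c = 0 :=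
    closure_mul_zero hT.2
  have hreg : IsRegInner (hat (AddSubgroup.closure T)) := hat_reg hC2
  have hle : B ≤ hat (AddSubgroup.closure T) := by
    intro b hb
    exact le_hat _ (AddSubgroup.subset_closure (hBT hb))
  have heq := h.2 _ hreg hle
  apply Set.Subset.antisymm hBT
  intro t ht
  have : t ∈ hat (AddSubgroup.closure T) := le_hat _ (AddSubgroup.subset_closure ht)
  rw [← heq] at this
  exact this

/-- (ii) ⟹ (iii) -/
theorem imp3
    (hsimple : (∃ a b : Q, a * b ≠ 0) ∧
      ∀ I : AddSubgroup Q, IsTwoSidedIdealSub I → I = ⊥ ∨ I = ⊤)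
    (hnonunital : ¬∃ e : Q, ∀ x : Q, e * x = x ∧ x * e = x)
    (hchar : ∀ x : Q, x ≠ 0 → x + x ≠ 0 ∧ x + x + x ≠ 0)
    (B : AddSubgroup Q) (h : IsMaxRegInner B) : IsMaxAbelianLieInner B := by
  refine ⟨reg_abelian h.1, ?_⟩
  intro B' hB' hle
  have hB'2 := abelian_sq_zero hsimple hnonunital hchar hB'
  have heq := h.2 (hat B') (hat_reg hB'2) (le_trans hle (le_hat B'))
  exact le_antisymm hle (by rw [heq]; exact le_hat B')

/-- (iii) ⟹ (ii) -/
theorem imp4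
    (hsimple : (∃ a b : Q, a * b ≠ 0) ∧
      ∀ I : AddSubgroup Q, IsTwoSidedIdealSub I → I = ⊥ ∨ I = ⊤)
    (hnonunital : ¬∃ e : Q, ∀ x : Q, e * x = x ∧ x * e = x)
    (hchar : ∀ x : Q, x ≠ 0 → x + x ≠ 0 ∧ x + x + x ≠ 0)
    (B : AddSubgroup Q) (h : IsMaxAbelianLieInner B) : IsMaxRegInner B := by
  have hB2 := abelian_sq_zero hsimple hnonunital hchar h.1
  have heq : B = hat B := h.2 (hat B) (reg_abelian (hat_reg hB2)) (le_hat B)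
  refine ⟨⟨?_, hB2⟩, ?_⟩
  · intro b hb x c hc
    have : b * x * c ∈ hat B := AddSubgroup.subset_closure (Or.inr ⟨b, hb, x, c, hc, rfl⟩)
    rw [← heq] at this
    exact this
  · intro B'' hB'' hle
    exact h.2 B'' (reg_abelian hB'') hle

end Cor410aux


/-- Corollary 4.10: for a non-unital simple ring `Q` of characteristic not `2` or `3` and an
additive subgroup `B` of `Q`, the following are equivalent: `B` is a maximal zero product
subset, `B` is a maximal regular inner ideal, and `B` is a maximal abelian inner ideal of the
Lie ring `Q⁽⁻⁾`. -/
theorem maxZeroProduct_iff_maxRegInner_iff_maxAbelianLieInner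
    {Q : Type*} [NonUnitalRing Q]
    (hsimple : (∃ a b : Q, a * b ≠ 0) ∧
      ∀ I : AddSubgroup Q, IsTwoSidedIdealSub I → I = ⊥ ∨ I = ⊤)
    (hnonunital : ¬∃ e : Q, ∀ x : Q, e * x = x ∧ x * e = x)
    (hchar : ∀ x : Q, x ≠ 0 → x + x ≠ 0 ∧ x + x + x ≠ 0)
    (B : AddSubgroup Q) :
    (IsMaxZeroProduct (B : Set Q) ↔ IsMaxRegInner B) ∧
      (IsMaxRegInner B ↔ IsMaxAbelianLieInner B) :=
  ⟨⟨fun h => Cor410aux.imp1 B h, fun h => Cor410aux.imp2 B h⟩,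
    ⟨fun h => Cor410aux.imp3 hsimple hnonunital hchar B h,
      fun h => Cor410aux.imp4 hsimple hnonunital hchar B h⟩⟩
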